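/- If M and N are perfect matchings of the complete graph on Fin 6 chosen independently and uniformly at random, then the probability that the union graph M ⊔ N is connected equals 8/15; equivalently, the number of connected pairs (120) divided by the total number of pairs (225) is 8/15. -/

import Mathlib

def matchings : List (Fin 6 → Fin 6) :=
  [![1,0,3,2,5,4],
   ![1,0,4,5,2,3],
   ![1,0,5,4,3,2],
   ![2,3,0,1,5,4],
   ![2,4,0,5,1,3],
   ![2,5,0,4,3,1],
   ![3,2,1,0,5,4],
   ![3,4,5,0,1,2],
   ![3,5,4,0,2,1],
   ![4,2,1,5,0,3],
   ![4,3,5,1,0,2],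
   ![4,5,3,2,0,1],
   ![5,2,1,4,3,0],
   ![5,3,4,1,2,0],
   ![5,4,3,2,1,0]]

def codes : List ℕ := [38125, 27145, 20485, 37820, 25730, 12560, 37635, 17055, 10545, 24460, 15970, 8350, 4805, 2975, 1865]

set_option maxRecDepth 10000 in
set_option synthInstance.maxSize 400000 in
set_option synthInstance.maxHeartbeats 2000000 in
set_option maxHeartbeats 4000000 in
lemma auxmem : ∀ d0 ∈ Finset.range 6, d0 ≠ 0 →
    ∀ d1 ∈ Finset.range 6, d1 ≠ 1 → ((d0 = 1) ↔ (d1 = 0)) →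
    ∀ d2 ∈ Finset.range 6, d2 ≠ 2 → ((d0 = 2) ↔ (d2 = 0)) → ((d1 = 2) ↔ (d2 = 1)) →
    ∀ d3 ∈ Finset.range 6, d3 ≠ 3 → ((d0 = 3) ↔ (d3 = 0)) → ((d1 = 3) ↔ (d3 = 1)) → ((d2 = 3) ↔ (d3 = 2)) →
    ∀ d4 ∈ Finset.range 6, d4 ≠ 4 → ((d0 = 4) ↔ (d4 = 0)) → ((d1 = 4) ↔ (d4 = 1)) → ((d2 = 4) ↔ (d4 = 2)) → ((d3 = 4) ↔ (d4 = 3)) →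
    ∀ d5 ∈ Finset.range 6, d5 ≠ 5 → ((d0 = 5) ↔ (d5 = 0)) → ((d1 = 5) ↔ (d5 = 1)) → ((d2 = 5) ↔ (d5 = 2)) → ((d3 = 5) ↔ (d5 = 3)) → ((d4 = 5) ↔ (d5 = 4)) →
    d0 + 6*d1 + 36*d2 + 216*d3 + 1296*d4 + 7776*d5 ∈ codes := by decide

lemma complete (f : Fin 6 → Fin 6) (h1 : ∀ v, f (f v) = v) (h2 : ∀ v, f v ≠ v) :
    f ∈ matchings := by
  have key : ∀ (j k : Fin 6), f j = k ↔ f k = j :=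
    fun j k => ⟨fun h => by rw [← h, h1], fun h => by rw [← h, h1]⟩
  have hIff : ∀ (j k : Fin 6), ((f j).val = k.val ↔ (f k).val = j.val) := fun j k =>
    ⟨fun h => congrArg Fin.val ((key j k).mp (Fin.ext h)),
     fun h => congrArg Fin.val ((key k j).mp (Fin.ext h))⟩
  have hc := auxmem ((f 0).val)
      (Finset.mem_range.mpr (f 0).isLt)
      (fun h => h2 0 (Fin.ext h))
      ((f 1).val)
      (Finset.mem_range.mpr (f 1).isLt)
      (fun h => h2 1 (Fin.ext h))
      (hIff 0 1)
      ((f 2).val)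
      (Finset.mem_range.mpr (f 2).isLt)
      (fun h => h2 2 (Fin.ext h))
      (hIff 0 2)
      (hIff 1 2)
      ((f 3).val)
      (Finset.mem_range.mpr (f 3).isLt)
      (fun h => h2 3 (Fin.ext h))
      (hIff 0 3)
      (hIff 1 3)
      (hIff 2 3)
      ((f 4).val)
      (Finset.mem_range.mpr (f 4).isLt)
      (fun h => h2 4 (Fin.ext h))
      (hIff 0 4)
      (hIff 1 4)
      (hIff 2 4)
      (hIff 3 4)
      ((f 5).val)
      (Finset.mem_range.mpr (f 5).isLt)
      (fun h => h2 5 (Fin.ext h))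
      (hIff 0 5)
      (hIff 1 5)
      (hIff 2 5)
      (hIff 3 5)
      (hIff 4 5)
  have b0 : (f 0).val < 6 := (f 0).isLt
  have b1 : (f 1).val < 6 := (f 1).isLt
  have b2 : (f 2).val < 6 := (f 2).isLt
  have b3 : (f 3).val < 6 := (f 3).isLt
  have b4 : (f 4).val < 6 := (f 4).isLt
  have b5 : (f 5).val < 6 := (f 5).isLt
  simp only [codes, List.mem_cons, List.not_mem_nil, or_false] at hc
  rcases hc with h|h|h|h|h|h|h|h|h|h|h|h|h|h|h
  · have e0 : (f 0).val = 1 := by omega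
    have e1 : (f 1).val = 0 := by omega
    have e2 : (f 2).val = 3 := by omega
    have e3 : (f 3).val = 2 := by omega
    have e4 : (f 4).val = 5 := by omega
    have e5 : (f 5).val = 4 := by omega
    have ef : f = ![1,0,3,2,5,4] := by
      funext v; fin_cases v
      exacts [Fin.ext e0, Fin.ext e1, Fin.ext e2, Fin.ext e3, Fin.ext e4, Fin.ext e5]
    rw [ef]; decide
  · have e0 : (f 0).val = 1 := by omega
    have e1 : (f 1).val = 0 := by omega
    have e2 : (f 2).val = 4 := by omega
    have e3 : (f 3).val = 5 := by omega
    have e4 : (f 4).val = 2 := by omega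
    have e5 : (f 5).val = 3 := by omega
    have ef : f = ![1,0,4,5,2,3] := by
      funext v; fin_cases v
      exacts [Fin.ext e0, Fin.ext e1, Fin.ext e2, Fin.ext e3, Fin.ext e4, Fin.ext e5]
    rw [ef]; decide
  · have e0 : (f 0).val = 1 := by omega
    have e1 : (f 1).val = 0 := by omega
    have e2 : (f 2).val = 5 := by omega
    have e3 : (f 3).val = 4 := by omega
    have e4 : (f 4).val = 3 := by omega
    have e5 : (f 5).val = 2 := by omega
    have ef : f = ![1,0,5,4,3,2] := by
      funext v; fin_cases v
      exacts [Fin.ext e0, Fin.ext e1, Fin.ext e2, Fin.ext e3, Fin.ext e4, Fin.ext e5]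
    rw [ef]; decide
  · have e0 : (f 0).val = 2 := by omega
    have e1 : (f 1).val = 3 := by omega
    have e2 : (f 2).val = 0 := by omega
    have e3 : (f 3).val = 1 := by omega
    have e4 : (f 4).val = 5 := by omega
    have e5 : (f 5).val = 4 := by omega
    have ef : f = ![2,3,0,1,5,4] := by
      funext v; fin_cases v
      exacts [Fin.ext e0, Fin.ext e1, Fin.ext e2, Fin.ext e3, Fin.ext e4, Fin.ext e5]
    rw [ef]; decide
  · have e0 : (f 0).val = 2 := by omega
    have e1 : (f 1).val = 4 := by omega
    have e2 : (f 2).val = 0 := by omega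
    have e3 : (f 3).val = 5 := by omega
    have e4 : (f 4).val = 1 := by omega
    have e5 : (f 5).val = 3 := by omega
    have ef : f = ![2,4,0,5,1,3] := by
      funext v; fin_cases v
      exacts [Fin.ext e0, Fin.ext e1, Fin.ext e2, Fin.ext e3, Fin.ext e4, Fin.ext e5]
    rw [ef]; decide
  · have e0 : (f 0).val = 2 := by omega
    have e1 : (f 1).val = 5 := by omega
    have e2 : (f 2).val = 0 := by omega
    have e3 : (f 3).val = 4 := by omega
    have e4 : (f 4).val = 3 := by omega
    have e5 : (f 5).val = 1 := by omega
    have ef : f = ![2,5,0,4,3,1] := by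
      funext v; fin_cases v
      exacts [Fin.ext e0, Fin.ext e1, Fin.ext e2, Fin.ext e3, Fin.ext e4, Fin.ext e5]
    rw [ef]; decide
  · have e0 : (f 0).val = 3 := by omega
    have e1 : (f 1).val = 2 := by omega
    have e2 : (f 2).val = 1 := by omega
    have e3 : (f 3).val = 0 := by omega
    have e4 : (f 4).val = 5 := by omega
    have e5 : (f 5).val = 4 := by omega
    have ef : f = ![3,2,1,0,5,4] := by
      funext v; fin_cases v
      exacts [Fin.ext e0, Fin.ext e1, Fin.ext e2, Fin.ext e3, Fin.ext e4, Fin.ext e5]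
    rw [ef]; decide
  · have e0 : (f 0).val = 3 := by omega
    have e1 : (f 1).val = 4 := by omega
    have e2 : (f 2).val = 5 := by omega
    have e3 : (f 3).val = 0 := by omega
    have e4 : (f 4).val = 1 := by omega
    have e5 : (f 5).val = 2 := by omega
    have ef : f = ![3,4,5,0,1,2] := by
      funext v; fin_cases v
      exacts [Fin.ext e0, Fin.ext e1, Fin.ext e2, Fin.ext e3, Fin.ext e4, Fin.ext e5]
    rw [ef]; decide
  · have e0 : (f 0).val = 3 := by omega
    have e1 : (f 1).val = 5 := by omega
    have e2 : (f 2).val = 4 := by omega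
    have e3 : (f 3).val = 0 := by omega
    have e4 : (f 4).val = 2 := by omega
    have e5 : (f 5).val = 1 := by omega
    have ef : f = ![3,5,4,0,2,1] := by
      funext v; fin_cases v
      exacts [Fin.ext e0, Fin.ext e1, Fin.ext e2, Fin.ext e3, Fin.ext e4, Fin.ext e5]
    rw [ef]; decide
  · have e0 : (f 0).val = 4 := by omega
    have e1 : (f 1).val = 2 := by omega
    have e2 : (f 2).val = 1 := by omega
    have e3 : (f 3).val = 5 := by omega
    have e4 : (f 4).val = 0 := by omega
    have e5 : (f 5).val = 3 := by omega
    have ef : f = ![4,2,1,5,0,3] := by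
      funext v; fin_cases v
      exacts [Fin.ext e0, Fin.ext e1, Fin.ext e2, Fin.ext e3, Fin.ext e4, Fin.ext e5]
    rw [ef]; decide
  · have e0 : (f 0).val = 4 := by omega
    have e1 : (f 1).val = 3 := by omega
    have e2 : (f 2).val = 5 := by omega
    have e3 : (f 3).val = 1 := by omega
    have e4 : (f 4).val = 0 := by omega
    have e5 : (f 5).val = 2 := by omega
    have ef : f = ![4,3,5,1,0,2] := by
      funext v; fin_cases v
      exacts [Fin.ext e0, Fin.ext e1, Fin.ext e2, Fin.ext e3, Fin.ext e4, Fin.ext e5]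
    rw [ef]; decide
  · have e0 : (f 0).val = 4 := by omega
    have e1 : (f 1).val = 5 := by omega
    have e2 : (f 2).val = 3 := by omega
    have e3 : (f 3).val = 2 := by omega
    have e4 : (f 4).val = 0 := by omega
    have e5 : (f 5).val = 1 := by omega
    have ef : f = ![4,5,3,2,0,1] := by
      funext v; fin_cases v
      exacts [Fin.ext e0, Fin.ext e1, Fin.ext e2, Fin.ext e3, Fin.ext e4, Fin.ext e5]
    rw [ef]; decide
  · have e0 : (f 0).val = 5 := by omega
    have e1 : (f 1).val = 2 := by omega
    have e2 : (f 2).val = 1 := by omega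
    have e3 : (f 3).val = 4 := by omega
    have e4 : (f 4).val = 3 := by omega
    have e5 : (f 5).val = 0 := by omega
    have ef : f = ![5,2,1,4,3,0] := by
      funext v; fin_cases v
      exacts [Fin.ext e0, Fin.ext e1, Fin.ext e2, Fin.ext e3, Fin.ext e4, Fin.ext e5]
    rw [ef]; decide
  · have e0 : (f 0).val = 5 := by omega
    have e1 : (f 1).val = 3 := by omega
    have e2 : (f 2).val = 4 := by omega
    have e3 : (f 3).val = 1 := by omega
    have e4 : (f 4).val = 2 := by omega
    have e5 : (f 5).val = 0 := by omega
    have ef : f = ![5,3,4,1,2,0] := by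
      funext v; fin_cases v
      exacts [Fin.ext e0, Fin.ext e1, Fin.ext e2, Fin.ext e3, Fin.ext e4, Fin.ext e5]
    rw [ef]; decide
  · have e0 : (f 0).val = 5 := by omega
    have e1 : (f 1).val = 4 := by omega
    have e2 : (f 2).val = 3 := by omega
    have e3 : (f 3).val = 2 := by omega
    have e4 : (f 4).val = 1 := by omega
    have e5 : (f 5).val = 0 := by omega
    have ef : f = ![5,4,3,2,1,0] := by
      funext v; fin_cases v
      exacts [Fin.ext e0, Fin.ext e1, Fin.ext e2, Fin.ext e3, Fin.ext e4, Fin.ext e5]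
    rw [ef]; decide

lemma matchings_iff (x : Fin 6 → Fin 6) :
    x ∈ matchings.toFinset ↔ ((∀ v, x (x v) = v) ∧ ∀ v, x v ≠ v) := by
  constructor
  · intro hx
    fin_cases hx <;> exact ⟨by decide, by decide⟩
  · rintro ⟨h1, h2⟩
    rw [List.mem_toFinset]
    exact complete x h1 h2

abbrev Invo := {f : Fin 6 → Fin 6 // (∀ v, f (f v) = v) ∧ (∀ v, f v ≠ v)}

instance invoFintype : Fintype Invo := Fintype.subtype matchings.toFinset matchings_iff

lemma card_invo : Fintype.card Invo = 15 := by
  rw [Fintype.card_of_subtype matchings.toFinset matchings_iff]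
  decide

def toSub (f : Invo) : (⊤ : SimpleGraph (Fin 6)).Subgraph where
  verts := Set.univ
  Adj v w := f.1 v = w
  adj_sub := by rintro v w rfl; exact (f.2.2 v).symm
  edge_vert := by intros; trivial
  symm := ⟨by rintro v w rfl; exact f.2.1 v⟩

lemma toSub_pm (f : Invo) : (toSub f).IsPerfectMatching := by
  rw [SimpleGraph.Subgraph.isPerfectMatching_iff]
  intro v
  exact ⟨f.1 v, rfl, fun w h => (show f.1 v = w from h).symm⟩

noncomputable def pmFun (M : (⊤ : SimpleGraph (Fin 6)).Subgraph)
    (h : M.IsPerfectMatching) (v : Fin 6) : Fin 6 :=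
  (SimpleGraph.Subgraph.isPerfectMatching_iff.mp h v).choose

lemma pmFun_adj {M : (⊤ : SimpleGraph (Fin 6)).Subgraph} (h : M.IsPerfectMatching) (v : Fin 6) :
    M.Adj v (pmFun M h v) :=
  (SimpleGraph.Subgraph.isPerfectMatching_iff.mp h v).choose_spec.1

lemma pmFun_eq {M : (⊤ : SimpleGraph (Fin 6)).Subgraph} (h : M.IsPerfectMatching) {v w : Fin 6}
    (hw : M.Adj v w) : w = pmFun M h v :=
  (SimpleGraph.Subgraph.isPerfectMatching_iff.mp h v).choose_spec.2 w hw

noncomputable def ofSub (M : (⊤ : SimpleGraph (Fin 6)).Subgraph) (h : M.IsPerfectMatching) :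
    Invo :=
  ⟨pmFun M h, fun v => (pmFun_eq h (M.adj_symm (pmFun_adj h v))).symm, fun v hv => by
    have h1 := pmFun_adj h v
    rw [hv] at h1
    exact (M.adj_sub h1).ne rfl⟩

noncomputable def pmEquiv :
    {M : (⊤ : SimpleGraph (Fin 6)).Subgraph // M.IsPerfectMatching} ≃ Invo where
  toFun M := ofSub M.1 M.2
  invFun f := ⟨toSub f, toSub_pm f⟩
  left_inv := by
    rintro ⟨M, hM⟩
    ext1
    ext v w
    · simp [toSub, hM.2 v]
    · show pmFun M hM v = w ↔ M.Adj v w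
      constructor
      · rintro rfl; exact pmFun_adj hM v
      · intro hvw; exact (pmFun_eq hM hvw).symm
  right_inv := by
    rintro ⟨f, hf⟩
    ext v : 2
    exact (pmFun_eq (toSub_pm ⟨f, hf⟩) (show f v = f v from rfl)).symm

lemma toSub_ofSub {M : (⊤ : SimpleGraph (Fin 6)).Subgraph} (hM : M.IsPerfectMatching) :
    toSub (ofSub M hM) = M :=
  congrArg Subtype.val (pmEquiv.left_inv ⟨M, hM⟩)

def uG (f g : Invo) : SimpleGraph (Fin 6) where
  Adj v w := v ≠ w ∧ (f.1 v = w ∨ g.1 v = w)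
  symm := ⟨by
    rintro v w ⟨h1, h2 | h2⟩
    · exact ⟨h1.symm, Or.inl (h2 ▸ f.2.1 v)⟩
    · exact ⟨h1.symm, Or.inr (h2 ▸ g.2.1 v)⟩⟩
  loopless := ⟨fun v => by rintro ⟨h, -⟩; exact h rfl⟩

instance uGDecidable (f g : Invo) : DecidableRel (uG f g).Adj := fun v w =>
  inferInstanceAs (Decidable (_ ∧ _))

lemma spanningCoe_eq (f g : Invo) :
    (toSub f ⊔ toSub g).spanningCoe = uG f g := by
  ext v w
  simp only [SimpleGraph.Subgraph.spanningCoe_adj, SimpleGraph.Subgraph.sup_adj]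
  show _ ↔ v ≠ w ∧ _
  constructor
  · rintro (h | h)
    · exact ⟨((toSub f).adj_sub h).ne, Or.inl h⟩
    · exact ⟨((toSub g).adj_sub h).ne, Or.inr h⟩
  · rintro ⟨-, h⟩; exact h

lemma conn_iff (f g : Invo) :
    (uG f g).Connected ↔ ∀ v, (uG f g).Reachable 0 v :=
  ⟨fun h v => h.preconnected 0 v,
   fun h => (SimpleGraph.connected_iff _).mpr ⟨fun u v => (h u).symm.trans (h v), ⟨0⟩⟩⟩

noncomputable def pairEquiv :
    {p : (⊤ : SimpleGraph (Fin 6)).Subgraph × (⊤ : SimpleGraph (Fin 6)).Subgraph //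
        p.1.IsPerfectMatching ∧ p.2.IsPerfectMatching ∧
          (p.1 ⊔ p.2).spanningCoe.Connected} ≃
    {q : Invo × Invo // ∀ v, (uG q.1 q.2).Reachable 0 v} where
  toFun p := ⟨(ofSub p.1.1 p.2.1, ofSub p.1.2 p.2.2.1), by
    rw [← conn_iff, ← spanningCoe_eq, toSub_ofSub, toSub_ofSub]; exact p.2.2.2⟩
  invFun q := ⟨(toSub q.1.1, toSub q.1.2), toSub_pm _, toSub_pm _, by
    rw [spanningCoe_eq, conn_iff]; exact q.2⟩
  left_inv := by
    rintro ⟨⟨M, N⟩, hM, hN, hc⟩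
    simp only [Subtype.mk.injEq, Prod.mk.injEq]
    exact ⟨toSub_ofSub hM, toSub_ofSub hN⟩
  right_inv := by
    rintro ⟨⟨f, g⟩, hc⟩
    simp only [Subtype.mk.injEq, Prod.mk.injEq]
    exact ⟨pmEquiv.right_inv f, pmEquiv.right_inv g⟩

noncomputable def pairEquiv' :
    {p : (⊤ : SimpleGraph (Fin 6)).Subgraph × (⊤ : SimpleGraph (Fin 6)).Subgraph //
        p.1.IsPerfectMatching ∧ p.2.IsPerfectMatching} ≃ Invo × Invo :=
  Equiv.subtypeProdEquivProd.trans (Equiv.prodCongr pmEquiv pmEquiv)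

set_option maxRecDepth 100000 in
set_option maxHeartbeats 4000000 in
lemma card_conn : Fintype.card {q : Invo × Invo // ∀ v, (uG q.1 q.2).Reachable 0 v} = 120 := by
  decide

/-- If `M` and `N` are perfect matchings of the complete graph on `Fin 6` chosen independently
and uniformly at random, the probability that the union graph `M ⊔ N` is connected equals
`8 / 15`: the number of connected pairs divided by the total number of pairs is `8 / 15`;
equivalently `120 / 225 = 8 / 15`. -/
theorem prob_union_connected_eq :
    ((Nat.card {p : (⊤ : SimpleGraph (Fin 6)).Subgraph × (⊤ : SimpleGraph (Fin 6)).Subgraph //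
        p.1.IsPerfectMatching ∧ p.2.IsPerfectMatching ∧
          (p.1 ⊔ p.2).spanningCoe.Connected} : ℚ) /
      (Nat.card {p : (⊤ : SimpleGraph (Fin 6)).Subgraph × (⊤ : SimpleGraph (Fin 6)).Subgraph //
        p.1.IsPerfectMatching ∧ p.2.IsPerfectMatching} : ℚ) = 8 / 15) ∧
    (120 : ℚ) / 225 = 8 / 15 := by
  constructor
  · rw [Nat.card_congr pairEquiv, Nat.card_congr pairEquiv',
      Nat.card_eq_fintype_card, Nat.card_eq_fintype_card, card_conn,
      Fintype.card_prod, card_invo]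
    norm_num
  · norm_num
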